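/- For all integers n ≥ 1 and 1 ≤ l ≤ n, the polynomial identity Σ_{λ: |λ| = n, ℓ(λ) = l} t^{2n(λ)} · [l choose m_1(λ), m_2(λ), …, m_n(λ)]_t = t^{l(l−1)} [n−1 choose l−1]_t holds in ℤ[t], where the sum is over all partitions of n with exactly l nonzero parts. -/

import Mathlib

open scoped BigOperators

/-- A partition: a weakly decreasing, finitely supported sequence of
nonnegative integers, indexed from `0` (so `parts 0` is `λ₁`). -/
structure Ptn where
  parts : ℕ → ℕ
  antitone' : Antitone parts
  exists_zero : ∃ N, parts N = 0

namespace Ptn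

/-- `|λ| = Σᵢ λᵢ`. -/
noncomputable def size (l : Ptn) : ℕ := ∑ᶠ j, l.parts j

/-- `ℓ(λ)`, the number of nonzero parts. -/
noncomputable def len (l : Ptn) : ℕ := Set.ncard {j | l.parts j ≠ 0}

/-- `n(λ) = Σᵢ (i-1) λᵢ` (with 1-based `i`). -/
noncomputable def nstat (l : Ptn) : ℕ := ∑ᶠ j, j * l.parts j

/-- `λ'ᵢ = #{j : λⱼ ≥ i}`, the transpose partition (meaningful for `i ≥ 1`). -/
noncomputable def conj (l : Ptn) (i : ℕ) : ℕ := Set.ncard {j | i ≤ l.parts j}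

/-- `mᵢ(λ) = #{j : λⱼ = i}` (meaningful for `i ≥ 1`). -/
noncomputable def mult (l : Ptn) (i : ℕ) : ℕ := Set.ncard {j | l.parts j = i}

/-- The partition `(1^n)`. -/
def onePow (n : ℕ) : Ptn where
  parts := fun j => if j < n then 1 else 0
  antitone' := by
    intro a b hab
    simp only
    split_ifs <;> omega
  exists_zero := ⟨n, by simp⟩

/-- The one-row partition `(n)`. -/
def single (n : ℕ) : Ptn where
  parts := fun j => if j = 0 then n else 0
  antitone' := by
    intro a b hab
    simp only
    split_ifs <;> omega
  exists_zero := ⟨n + 1, by simp⟩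

/-- The empty partition. -/
def empty : Ptn := onePow 0

end Ptn

/-- The q-Pochhammer symbol `(x;t)_n = ∏_{i=1}^n (1 - x t^{i-1})`. -/
def qPoch {K : Type*} [CommRing K] (x t : K) (n : ℕ) : K :=
  ∏ i ∈ Finset.range n, (1 - x * t ^ i)

/-- The Gaussian binomial coefficient `[n choose r]_t`, zero for `r > n`. -/
noncomputable def qBinom {K : Type*} [Field K] (t : K) (n r : ℕ) : K :=
  if r ≤ n then qPoch t t n / (qPoch t t r * qPoch t t (n - r)) else 0

/-- The Gaussian binomial coefficient with integer arguments,
zero outside `0 ≤ r ≤ n`. -/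
noncomputable def qBinomZ {K : Type*} [Field K] (t : K) (n r : ℤ) : K :=
  if 0 ≤ r ∧ r ≤ n then
    qPoch t t n.toNat / (qPoch t t r.toNat * qPoch t t (n - r).toNat)
  else 0

/-- `I_λ = ⊕ᵢ k[X]/(X^{λᵢ})`, a module over `k[X]` on which `X` acts nilpotently. -/
def Imod (k : Type*) [Field k] (l : Ptn) : Type _ :=
  ∀ i : Fin l.len, Polynomial k ⧸ Ideal.span {(Polynomial.X : Polynomial k) ^ l.parts (i : ℕ)}

noncomputable instance (k : Type*) [Field k] (l : Ptn) : AddCommGroup (Imod k l) :=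
  inferInstanceAs (AddCommGroup
    (∀ i : Fin l.len, Polynomial k ⧸ Ideal.span {(Polynomial.X : Polynomial k) ^ l.parts (i : ℕ)}))

noncomputable instance (k : Type*) [Field k] (l : Ptn) : Module (Polynomial k) (Imod k l) :=
  inferInstanceAs (Module (Polynomial k)
    (∀ i : Fin l.len, Polynomial k ⧸ Ideal.span {(Polynomial.X : Polynomial k) ^ l.parts (i : ℕ)}))

/-- The Hall number `g^λ_{μ,ν}`: the number of `k[X]`-submodules `N ⊆ I_λ` with
`N ≅ I_ν` and `I_λ/N ≅ I_μ`. -/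
noncomputable def hallNum (k : Type*) [Field k] (l m n : Ptn) : ℕ :=
  Nat.card {N : Submodule (Polynomial k) (Imod k l) //
    Nonempty ((↥N) ≃ₗ[Polynomial k] Imod k n) ∧
    Nonempty ((Imod k l ⧸ N) ≃ₗ[Polynomial k] Imod k m)}

/-- `a_λ`, the number of `k[X]`-module automorphisms of `I_λ`. -/
noncomputable def aut (k : Type*) [Field k] (l : Ptn) : ℕ :=
  Nat.card (Imod k l ≃ₗ[Polynomial k] Imod k l)

section PtnAux

namespace Ptn

theorem ext' {a b : Ptn} (h : a.parts = b.parts) : a = b := by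
  cases a; cases b; simpa using h

lemma parts_zero_of_le (l : Ptn) {N j : ℕ} (h : l.parts N = 0) (hj : N ≤ j) :
    l.parts j = 0 :=
  Nat.le_zero.mp (h ▸ l.antitone' hj)

lemma support_finite (l : Ptn) : {j | l.parts j ≠ 0}.Finite := by
  obtain ⟨N, hN⟩ := l.exists_zero
  refine (Set.finite_Iio N).subset fun j hj => ?_
  by_contra h
  exact hj (l.parts_zero_of_le hN (not_lt.mp h))

lemma mem_support_iff_lt_len (l : Ptn) (j : ℕ) : l.parts j ≠ 0 ↔ j < l.len := by
  have hfin := l.support_finite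
  set s := hfin.toFinset with hs
  have hmem : ∀ j, j ∈ s ↔ l.parts j ≠ 0 := fun j => hfin.mem_toFinset
  have hlen : l.len = s.card := by
    rw [len, Set.ncard_eq_toFinset_card _ hfin]
  rw [hlen, ← hmem]
  constructor
  · intro hj
    have hsub : Finset.range (j + 1) ⊆ s := by
      intro k hk
      rw [hmem]
      intro h0
      have := l.parts_zero_of_le h0 (Nat.lt_succ_iff.mp (Finset.mem_range.mp hk))
      have hj' := (hmem j).mp hj
      omega
    calc j < j + 1 := Nat.lt_succ_self j
    _ = (Finset.range (j+1)).card := (Finset.card_range _).symm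
    _ ≤ s.card := Finset.card_le_card hsub
  · intro hj
    by_contra hns
    have hz : l.parts j = 0 := by
      have := (hmem j).not.mp hns; simpa using this
    have hsub : s ⊆ Finset.range j := by
      intro k hk
      rw [Finset.mem_range]
      by_contra h
      exact (hmem k).mp hk (l.parts_zero_of_le hz (not_lt.mp h))
    have := Finset.card_le_card hsub
    rw [Finset.card_range] at this
    omega

lemma parts_eq_zero (l : Ptn) {j : ℕ} (h : l.len ≤ j) : l.parts j = 0 := by
  have := (l.mem_support_iff_lt_len j).not
  simp only [not_not, not_lt] at this
  exact this.mpr h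

lemma one_le_parts (l : Ptn) {j : ℕ} (h : j < l.len) : 1 ≤ l.parts j := by
  have := (l.mem_support_iff_lt_len j).mpr h
  omega

lemma size_eq_sum (l : Ptn) {c : ℕ} (hc : l.len ≤ c) :
    l.size = ∑ j ∈ Finset.range c, l.parts j := by
  refine finsum_eq_sum_of_support_subset _ ?_
  intro j hj
  rw [Function.mem_support] at hj
  have := (l.mem_support_iff_lt_len j).mp hj
  simp only [Finset.coe_range, Set.mem_Iio]
  omega

lemma nstat_eq_sum (l : Ptn) {c : ℕ} (hc : l.len ≤ c) :
    l.nstat = ∑ j ∈ Finset.range c, j * l.parts j := by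
  refine finsum_eq_sum_of_support_subset _ ?_
  intro j hj
  rw [Function.mem_support] at hj
  have hj' : l.parts j ≠ 0 := by intro h; simp [h] at hj
  have := (l.mem_support_iff_lt_len j).mp hj'
  simp only [Finset.coe_range, Set.mem_Iio]
  omega

lemma len_le_size (l : Ptn) : l.len ≤ l.size := by
  rw [l.size_eq_sum (le_refl _)]
  calc l.len = ∑ _j ∈ Finset.range l.len, 1 := by simp
  _ ≤ ∑ j ∈ Finset.range l.len, l.parts j :=
      Finset.sum_le_sum fun j hj => l.one_le_parts (Finset.mem_range.mp hj)

lemma parts_le_size (l : Ptn) (j : ℕ) : l.parts j ≤ l.size := by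
  rcases Nat.eq_zero_or_pos (l.parts j) with h | h
  · omega
  · have hj : j < l.len := (l.mem_support_iff_lt_len j).mp (by omega)
    rw [l.size_eq_sum (le_refl _)]
    exact Finset.single_le_sum (fun i _ => Nat.zero_le _) (Finset.mem_range.mpr hj)

lemma mult_eq_card (l : Ptn) {i : ℕ} (hi : i ≠ 0) :
    l.mult i = ((Finset.range l.len).filter (fun j => l.parts j = i)).card := by
  rw [mult, ← Set.ncard_coe_finset]
  congr 1
  ext j
  simp only [Set.mem_setOf_eq, Finset.coe_filter, Finset.mem_range]
  constructor
  · intro h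
    exact ⟨(l.mem_support_iff_lt_len j).mp (by omega), h⟩
  · exact fun h => h.2

lemma mult_eq_zero (l : Ptn) {i : ℕ} (hi : l.size < i) : l.mult i = 0 := by
  rw [mult]
  convert Set.ncard_empty ℕ
  ext j
  simp only [Set.mem_setOf_eq, Set.mem_empty_iff_false, iff_false]
  intro h
  have := l.parts_le_size j
  omega

lemma finite_size (n : ℕ) : {p : Ptn | p.size = n}.Finite := by
  have : Set.InjOn (fun (p : Ptn) (i : Fin n) =>
      (⟨min (p.parts i) n, by omega⟩ : Fin (n+1))) {p : Ptn | p.size = n} := by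
    intro a ha b hb hab
    have ha2 : a.size = n := ha
    have hb2 : b.size = n := hb
    refine ext' (funext fun j => ?_)
    rcases lt_or_ge j n with hj | hj
    · have := congrFun hab ⟨j, hj⟩
      have ha' : a.parts j ≤ n := ha2 ▸ a.parts_le_size j
      have hb' : b.parts j ≤ n := hb2 ▸ b.parts_le_size j
      simp only [Fin.mk.injEq] at this
      omega
    · have haa := a.len_le_size
      have hbb := b.len_le_size
      have ha' : a.parts j = 0 := a.parts_eq_zero (by omega)
      have hb' : b.parts j = 0 := b.parts_eq_zero (by omega)
      rw [ha', hb']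
  exact Set.Finite.of_finite_image (Set.toFinite _) this

lemma finite_cond (n c : ℕ) : {p : Ptn | p.size = n ∧ p.len = c}.Finite :=
  (finite_size n).subset fun _ hx => hx.1

lemma finite_cond' (n c : ℕ) : {p : Ptn | p.size = n ∧ p.len ≤ c}.Finite :=
  (finite_size n).subset fun _ hx => hx.1

end Ptn

end PtnAux
section StripPad

namespace Ptn

lemma len_eq_of_iff (l : Ptn) {c : ℕ} (h : ∀ j, l.parts j ≠ 0 ↔ j < c) : l.len = c := by
  rw [len]
  have : {j | l.parts j ≠ 0} = Set.Iio c := Set.ext h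
  rw [this, ← Finset.coe_range, Set.ncard_coe_finset, Finset.card_range]

lemma len_le_of (l : Ptn) {c : ℕ} (h : ∀ j, l.parts j ≠ 0 → j < c) : l.len ≤ c := by
  rw [len, ← Finset.card_range c, ← Set.ncard_coe_finset]
  exact Set.ncard_le_ncard (fun j hj => by
    simpa [Finset.coe_range, Set.mem_Iio] using h j hj) (by
    rw [Finset.coe_range]; exact Set.finite_Iio c)

/-- Remove the first column. -/
def strip (l : Ptn) : Ptn where
  parts := fun j => l.parts j - 1
  antitone' := fun _ _ hab => Nat.sub_le_sub_right (l.antitone' hab) 1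
  exists_zero := by
    obtain ⟨N, hN⟩ := l.exists_zero
    exact ⟨N, by simp [hN]⟩

/-- Add a column of height `c` (requires `len ≤ c` to be well-behaved). -/
def pad (m : Ptn) (c : ℕ) : Ptn where
  parts := fun j => if j < c then m.parts j + 1 else 0
  antitone' := by
    intro a b hab
    simp only
    split_ifs with h1 h2 h2
    · exact Nat.succ_le_succ (m.antitone' hab)
    · omega
    · omega
    · omega
  exists_zero := ⟨c, by simp⟩

lemma pad_parts (m : Ptn) (c j : ℕ) :
    (m.pad c).parts j = if j < c then m.parts j + 1 else 0 := rfl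

lemma strip_parts (l : Ptn) (j : ℕ) : l.strip.parts j = l.parts j - 1 := rfl

lemma len_pad (m : Ptn) {c : ℕ} (h : m.len ≤ c) : (m.pad c).len = c := by
  refine (m.pad c).len_eq_of_iff fun j => ?_
  rw [pad_parts]
  split_ifs with hj <;> simp [hj]

lemma pad_strip (l : Ptn) : l.strip.pad l.len = l := by
  refine ext' (funext fun j => ?_)
  rw [pad_parts, strip_parts]
  split_ifs with hj
  · have := l.one_le_parts hj; omega
  · exact (l.parts_eq_zero (not_lt.mp hj)).symm

lemma strip_pad (m : Ptn) {c : ℕ} (h : m.len ≤ c) : (m.pad c).strip = m := by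
  refine ext' (funext fun j => ?_)
  rw [strip_parts, pad_parts]
  split_ifs with hj
  · omega
  · have := m.parts_eq_zero (le_trans h (not_lt.mp hj)); omega

lemma len_strip_le (l : Ptn) : l.strip.len ≤ l.len := by
  refine l.strip.len_le_of fun j hj => ?_
  rw [strip_parts] at hj
  exact (l.mem_support_iff_lt_len j).mp (by omega)

lemma size_pad (m : Ptn) {c : ℕ} (h : m.len ≤ c) : (m.pad c).size = m.size + c := by
  rw [(m.pad c).size_eq_sum (le_of_eq (m.len_pad h)), m.size_eq_sum h]
  have : ∀ j ∈ Finset.range c, (m.pad c).parts j = m.parts j + 1 := by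
    intro j hj
    rw [pad_parts, if_pos (Finset.mem_range.mp hj)]
  rw [Finset.sum_congr rfl this, Finset.sum_add_distrib]
  simp

lemma nstat_pad (m : Ptn) {c : ℕ} (h : m.len ≤ c) :
    2 * (m.pad c).nstat = 2 * m.nstat + c * (c - 1) := by
  rw [(m.pad c).nstat_eq_sum (le_of_eq (m.len_pad h)), m.nstat_eq_sum h]
  have : ∀ j ∈ Finset.range c, j * (m.pad c).parts j = j * m.parts j + j := by
    intro j hj
    rw [pad_parts, if_pos (Finset.mem_range.mp hj)]
    ring
  rw [Finset.sum_congr rfl this, Finset.sum_add_distrib]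
  have := Finset.sum_range_id_mul_two c
  omega

lemma mult_pad_one (m : Ptn) {c : ℕ} (h : m.len ≤ c) :
    (m.pad c).mult 1 = c - m.len := by
  rw [mult]
  have : {j | (m.pad c).parts j = 1} = Set.Ico m.len c := by
    ext j
    rw [Set.mem_setOf_eq, pad_parts, Set.mem_Ico]
    split_ifs with hj
    · constructor
      · intro h1
        have : m.parts j = 0 := by omega
        refine ⟨?_, hj⟩
        by_contra hc
        exact (m.mem_support_iff_lt_len j).mpr (by omega) this
      · intro ⟨h1, _⟩
        rw [m.parts_eq_zero h1]
    · simp only [Nat.zero_ne_one, false_iff]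
      omega
  rw [this, ← Finset.coe_Ico, Set.ncard_coe_finset, Nat.card_Ico]

lemma mult_pad_succ (m : Ptn) {c : ℕ} (h : m.len ≤ c) (i : ℕ) :
    (m.pad c).mult (i + 2) = m.mult (i + 1) := by
  rw [mult, mult]
  congr 1
  ext j
  rw [Set.mem_setOf_eq, Set.mem_setOf_eq, pad_parts]
  split_ifs with hj
  · omega
  · constructor
    · intro h1; exact h1.elim
    · intro h1
      have : j < m.len := (m.mem_support_iff_lt_len j).mp (by omega)
      omega

lemma size_strip (l : Ptn) : l.size = l.strip.size + l.len := by
  conv_lhs => rw [← l.pad_strip]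
  exact l.strip.size_pad l.len_strip_le

end Ptn

end StripPad
section QAlg

noncomputable def tq : RatFunc ℚ := RatFunc.X
noncomputable def Pq (r : ℕ) : RatFunc ℚ := qPoch tq tq r
noncomputable def Bq (n r : ℕ) : RatFunc ℚ := qBinom tq n r

lemma tq_pow_ne_one {k : ℕ} (hk : k ≠ 0) : tq ^ k ≠ 1 := by
  intro h
  have h2 : (Polynomial.X : Polynomial ℚ) ^ k = 1 := by
    apply IsFractionRing.injective (Polynomial ℚ) (RatFunc ℚ)
    rw [map_pow, map_one, RatFunc.algebraMap_X]
    exact h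
  have h3 := congrArg Polynomial.natDegree h2
  rw [Polynomial.natDegree_X_pow, Polynomial.natDegree_one] at h3
  exact hk h3

lemma one_sub_tq_pow_ne_zero (r : ℕ) : (1 : RatFunc ℚ) - tq ^ (r + 1) ≠ 0 := by
  intro h
  exact tq_pow_ne_one (Nat.succ_ne_zero r) (sub_eq_zero.mp h).symm

lemma Pq_zero : Pq 0 = 1 := by simp [Pq, qPoch]

lemma Pq_succ (r : ℕ) : Pq (r + 1) = Pq r * (1 - tq ^ (r + 1)) := by
  rw [Pq, Pq, qPoch, qPoch, Finset.prod_range_succ, pow_succ']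

lemma Pq_ne_zero (r : ℕ) : Pq r ≠ 0 := by
  induction r with
  | zero => rw [Pq_zero]; exact one_ne_zero
  | succ n ih =>
    rw [Pq_succ]
    exact mul_ne_zero ih (one_sub_tq_pow_ne_zero n)

lemma Bq_def {n r : ℕ} (h : r ≤ n) : Bq n r = Pq n / (Pq r * Pq (n - r)) := by
  rw [Bq, qBinom, if_pos h]; rfl

lemma Bq_eq_zero {n r : ℕ} (h : n < r) : Bq n r = 0 := by
  rw [Bq, qBinom, if_neg (by omega)]

lemma Bq_self (n : ℕ) : Bq n n = 1 := by
  rw [Bq_def le_rfl, Nat.sub_self, Pq_zero, mul_one, div_self (Pq_ne_zero n)]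

lemma Bq_zero (n : ℕ) : Bq n 0 = 1 := by
  rw [Bq_def (Nat.zero_le n), Pq_zero, Nat.sub_zero, one_mul, div_self (Pq_ne_zero n)]

/-- Pascal I : `[b ; k+1] = [b-1 ; k+1] + t^(b-1-k) [b-1 ; k]` for `b ≥ 1`. -/
lemma Bq_pascal1 {b : ℕ} (hb : 1 ≤ b) (k : ℕ) :
    Bq b (k + 1) = Bq (b - 1) (k + 1) + tq ^ (b - (k + 1)) * Bq (b - 1) k := by
  obtain ⟨b, rfl⟩ : ∃ b', b = b' + 1 := ⟨b - 1, by omega⟩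
  simp only [Nat.add_sub_cancel]
  rcases lt_or_ge b k with hbk | hbk
  · rw [Bq_eq_zero (by omega), Bq_eq_zero (by omega), Bq_eq_zero (by omega)]
    ring
  rcases eq_or_lt_of_le hbk with rfl | hbk2
  · rw [Bq_self, Bq_eq_zero (by omega), Bq_self]
    simp
  -- now k + 1 ≤ b
  have hkb : k + 1 ≤ b := hbk2
  rw [Bq_def (by omega), Bq_def hkb, Bq_def (by omega)]
  have e1 : b + 1 - (k + 1) = (b - (k + 1)) + 1 := by omega
  have e2 : b - k = (b - (k + 1)) + 1 := by omega
  set d := b - (k + 1) with hd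
  have e3 : b + 1 = (b) + 1 := rfl
  rw [e1, e2]
  have hb1 : Pq (b + 1) = Pq b * (1 - tq ^ (b + 1)) := Pq_succ b
  have hd1 : Pq (d + 1) = Pq d * (1 - tq ^ (d + 1)) := Pq_succ d
  have hk1 : Pq (k + 1) = Pq k * (1 - tq ^ (k + 1)) := Pq_succ k
  have hbd : b + 1 = k + 1 + (d + 1) := by omega
  have hpow : tq ^ (b + 1) = tq ^ (k + 1) * tq ^ (d + 1) := by
    rw [← pow_add, ← hbd]
  have hk0 := Pq_ne_zero k
  have hd0 := Pq_ne_zero d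
  have h1k := one_sub_tq_pow_ne_zero k
  have h1d := one_sub_tq_pow_ne_zero d
  rw [hb1, hd1, hk1, hpow]
  field_simp
  ring
/-- Pascal II : `[b+1 ; k+1] = [b ; k] + t^(k+1) [b ; k+1]`. -/
lemma Bq_pascal2 (b k : ℕ) :
    Bq (b + 1) (k + 1) = Bq b k + tq ^ (k + 1) * Bq b (k + 1) := by
  rcases lt_or_ge b k with hbk | hbk
  · rw [Bq_eq_zero (by omega), Bq_eq_zero (by omega), Bq_eq_zero (by omega)]
    ring
  rcases eq_or_lt_of_le hbk with rfl | hbk2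
  · rw [Bq_self, Bq_self, Bq_eq_zero (by omega)]
    ring
  have hkb : k + 1 ≤ b := hbk2
  rw [Bq_def (by omega), Bq_def (by omega), Bq_def hkb]
  have e1 : b + 1 - (k + 1) = (b - (k + 1)) + 1 := by omega
  have e2 : b - k = (b - (k + 1)) + 1 := by omega
  set d := b - (k + 1) with hd
  rw [e1, e2]
  have hb1 : Pq (b + 1) = Pq b * (1 - tq ^ (b + 1)) := Pq_succ b
  have hd1 : Pq (d + 1) = Pq d * (1 - tq ^ (d + 1)) := Pq_succ d
  have hk1 : Pq (k + 1) = Pq k * (1 - tq ^ (k + 1)) := Pq_succ k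
  have hbd : b + 1 = k + 1 + (d + 1) := by omega
  have hpow : tq ^ (b + 1) = tq ^ (k + 1) * tq ^ (d + 1) := by
    rw [← pow_add, ← hbd]
  have hk0 := Pq_ne_zero k
  have hd0 := Pq_ne_zero d
  have h1k := one_sub_tq_pow_ne_zero k
  have h1d := one_sub_tq_pow_ne_zero d
  rw [hb1, hd1, hk1, hpow]
  field_simp
  ring

end QAlg
section Vandermonde

noncomputable def Dsum (l m : ℕ) : RatFunc ℚ :=
  ∑ k ∈ Finset.range l, Bq l (k + 1) * tq ^ (k * (k + 1)) * Bq (m - 1) k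

noncomputable def Vsum (a b : ℕ) : RatFunc ℚ :=
  ∑ k ∈ Finset.range (a + 1), tq ^ (k * k) * Bq a k * Bq b k

lemma Dsum_one (m : ℕ) : Dsum 1 m = 1 := by
  rw [Dsum]
  simp [Bq_self, Bq_zero]

lemma Vsum_zero_right (a : ℕ) : Vsum a 0 = 1 := by
  rw [Vsum]
  rw [Finset.sum_eq_single_of_mem 0 (Finset.mem_range.mpr (by omega))]
  · simp [Bq_zero]
  · intro k _ hk
    rw [Bq_eq_zero (show (0:ℕ) < k by omega)]
    ring

lemma Vsum_zero_left (b : ℕ) : Vsum 0 b = 1 := by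
  rw [Vsum]
  simp [Bq_zero]

lemma vand (N : ℕ) :
    (∀ l m, 1 ≤ l → 1 ≤ m → l + m ≤ N → Dsum l m = Bq (l + m - 1) (l - 1)) ∧
    (∀ a b, a + b ≤ N → Vsum a b = Bq (a + b) a) := by
  induction N with
  | zero =>
    constructor
    · intro l m hl hm hlm; omega
    · intro a b hab
      obtain rfl : a = 0 := by omega
      obtain rfl : b = 0 := by omega
      rw [Vsum_zero_right, Bq_zero]
  | succ N ih =>
    have hD : ∀ l m, 1 ≤ l → 1 ≤ m → l + m ≤ N + 1 → Dsum l m = Bq (l + m - 1) (l - 1) := by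
      intro l m hl hm hlm
      obtain ⟨l', rfl⟩ : ∃ l', l = l' + 1 := ⟨l - 1, by omega⟩
      rcases Nat.eq_zero_or_pos l' with rfl | hl'
      · rw [Dsum_one]
        rw [show 0 + 1 + m - 1 = m by omega, show 0 + 1 - 1 = 0 by omega, Bq_zero]
      -- main case : l' ≥ 1
      have step1 : Dsum (l' + 1) m =
          (∑ k ∈ Finset.range (l' + 1), Bq l' (k + 1) * tq ^ (k * (k + 1)) * Bq (m - 1) k)
          + (∑ k ∈ Finset.range (l' + 1),
              tq ^ (l' - k) * Bq l' k * tq ^ (k * (k + 1)) * Bq (m - 1) k) := by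
        rw [Dsum, ← Finset.sum_add_distrib]
        refine Finset.sum_congr rfl fun k _ => ?_
        rw [Bq_pascal1 (by omega) k, show l' + 1 - (k + 1) = l' - k by omega,
          show l' + 1 - 1 = l' by omega]
        ring
      have step2 : (∑ k ∈ Finset.range (l' + 1),
          Bq l' (k + 1) * tq ^ (k * (k + 1)) * Bq (m - 1) k) = Dsum l' m := by
        rw [Finset.sum_range_succ, Bq_eq_zero (show l' < l' + 1 by omega), Dsum]
        ring
      have step3 : (∑ k ∈ Finset.range (l' + 1),
          tq ^ (l' - k) * Bq l' k * tq ^ (k * (k + 1)) * Bq (m - 1) k)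
          = tq ^ l' * Vsum l' (m - 1) := by
        rw [Vsum, Finset.mul_sum]
        refine Finset.sum_congr rfl fun k hk => ?_
        have hkl : k ≤ l' := by
          have := Finset.mem_range.mp hk; omega
        rw [show tq ^ (l' - k) * Bq l' k * tq ^ (k * (k + 1)) * Bq (m - 1) k
            = tq ^ (l' - k) * tq ^ (k * (k + 1)) * (Bq l' k * Bq (m - 1) k) by ring,
          ← pow_add,
          show l' - k + k * (k + 1) = l' + k * k by
            have h2 : k * (k + 1) = k * k + k := by ring
            omega,
          pow_add]
        ring
      rw [step1, step2, step3, ih.1 l' m hl' hm (by omega),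
        ih.2 l' (m - 1) (by omega), show l' + (m - 1) = l' + m - 1 by omega]
      have hP := Bq_pascal2 (l' + m - 1) (l' - 1)
      rw [show l' - 1 + 1 = l' by omega, show l' + m - 1 + 1 = l' + 1 + m - 1 by omega] at hP
      rw [show l' + 1 - 1 = l' by omega, hP]
    refine ⟨hD, ?_⟩
    intro a b hab
    rcases Nat.eq_zero_or_pos b with rfl | hb
    · rw [Vsum_zero_right, Nat.add_zero, Bq_self]
    rcases Nat.eq_zero_or_pos a with rfl | ha
    · rw [Vsum_zero_left, Nat.zero_add, Bq_zero]
    obtain ⟨b', rfl⟩ : ∃ b', b = b' + 1 := ⟨b - 1, by omega⟩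
    have step1 : Vsum a (b' + 1) = Vsum a b' +
        ∑ k ∈ Finset.range a,
          tq ^ ((k + 1) * (k + 1)) * Bq a (k + 1) * (tq ^ (b' - k) * Bq b' k) := by
      rw [Vsum, Vsum, Finset.sum_range_succ', Finset.sum_range_succ',
        show Bq (b' + 1) 0 = Bq b' 0 by rw [Bq_zero, Bq_zero],
        add_right_comm, add_left_inj, ← Finset.sum_add_distrib]
      refine Finset.sum_congr rfl fun k _ => ?_
      rw [Bq_pascal1 (show 1 ≤ b' + 1 by omega) k,
        show b' + 1 - (k + 1) = b' - k by omega, show b' + 1 - 1 = b' by omega]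
      ring
    have step2 : (∑ k ∈ Finset.range a,
        tq ^ ((k + 1) * (k + 1)) * Bq a (k + 1) * (tq ^ (b' - k) * Bq b' k))
        = tq ^ (b' + 1) * Dsum a (b' + 1) := by
      rw [Dsum, Finset.mul_sum, show b' + 1 - 1 = b' by omega]
      refine Finset.sum_congr rfl fun k _ => ?_
      rcases le_or_gt k b' with hk | hk
      · rw [show tq ^ ((k + 1) * (k + 1)) * Bq a (k + 1) * (tq ^ (b' - k) * Bq b' k)
            = tq ^ ((k + 1) * (k + 1)) * tq ^ (b' - k) * (Bq a (k + 1) * Bq b' k) by ring,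
          ← pow_add,
          show (k + 1) * (k + 1) + (b' - k) = b' + 1 + k * (k + 1) by
            have h1 : (k + 1) * (k + 1) = k * (k + 1) + k + 1 := by ring
            omega,
          pow_add]
        ring
      · rw [Bq_eq_zero hk]
        ring
    rw [step1, step2, ih.2 a b' (by omega), hD a (b' + 1) (by omega) (by omega) (by omega),
      show a + (b' + 1) - 1 = a + b' by omega]
    obtain ⟨a'', rfl⟩ : ∃ a'', a = a'' + 1 := ⟨a - 1, by omega⟩
    have hP := Bq_pascal1 (show 1 ≤ a'' + 1 + b' + 1 by omega) a''
    rw [show a'' + 1 + b' + 1 - 1 = a'' + 1 + b' by omega,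
      show a'' + 1 + b' + 1 - (a'' + 1) = b' + 1 by omega] at hP
    rw [show a'' + 1 + (b' + 1) = a'' + 1 + b' + 1 by omega,
      show a'' + 1 - 1 = a'' by omega, hP]

end Vandermonde
section PartSum

noncomputable def Qq (mu : Ptn) : RatFunc ℚ := ∏ᶠ i : ℕ, Pq (mu.mult (i + 1))

lemma Qq_eq_prod (mu : Ptn) {B : ℕ} (hB : mu.size ≤ B) :
    Qq mu = ∏ i ∈ Finset.range B, Pq (mu.mult (i + 1)) := by
  refine finprod_eq_prod_of_mulSupport_subset _ ?_
  intro i hi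
  rw [Function.mem_mulSupport] at hi
  have h0 : mu.mult (i + 1) ≠ 0 := by
    intro h; rw [h, Pq_zero] at hi; exact hi rfl
  have hle : ¬ mu.size < i + 1 := fun hc => h0 (mu.mult_eq_zero hc)
  simp only [Finset.coe_range, Set.mem_Iio]
  omega

lemma Qq_ne_zero (mu : Ptn) : Qq mu ≠ 0 := by
  rw [Qq_eq_prod mu (le_refl mu.size)]
  exact Finset.prod_ne_zero_iff.mpr fun i _ => Pq_ne_zero _

lemma Qq_pad (mu : Ptn) {c : ℕ} (h : mu.len ≤ c) :
    Qq (mu.pad c) = Pq (c - mu.len) * Qq mu := by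
  have hsz : (mu.pad c).size = mu.size + c := mu.size_pad h
  have hB : (mu.pad c).size ≤ mu.size + c + 1 := by omega
  rw [Qq_eq_prod (mu.pad c) hB, Finset.prod_range_succ']
  have h1 : ∀ i ∈ Finset.range (mu.size + c),
      Pq ((mu.pad c).mult (i + 1 + 1)) = Pq (mu.mult (i + 1)) := by
    intro i _
    rw [show i + 1 + 1 = i + 2 by omega, mu.mult_pad_succ h i]
  rw [Finset.prod_congr rfl h1, mu.mult_pad_one h,
    ← Qq_eq_prod mu (by omega : mu.size ≤ mu.size + c)]
  ring

noncomputable def Fq (c : ℕ) (lam : Ptn) : RatFunc ℚ :=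
  tq ^ (2 * lam.nstat) * (Pq c / Qq lam)

noncomputable def Tset (n c : ℕ) : Finset Ptn := (Ptn.finite_cond n c).toFinset
noncomputable def Sset (n c : ℕ) : Finset Ptn := (Ptn.finite_cond' n c).toFinset

lemma mem_Tset {n c : ℕ} {lam : Ptn} : lam ∈ Tset n c ↔ lam.size = n ∧ lam.len = c :=
  Set.Finite.mem_toFinset _

lemma mem_Sset {n c : ℕ} {lam : Ptn} : lam ∈ Sset n c ↔ lam.size = n ∧ lam.len ≤ c :=
  Set.Finite.mem_toFinset _

noncomputable def Gq (n c : ℕ) : RatFunc ℚ := ∑ lam ∈ Tset n c, Fq c lam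

lemma len_empty : Ptn.empty.len = 0 :=
  Ptn.len_eq_of_iff _ fun j => by simp [Ptn.empty, Ptn.onePow]

lemma size_empty : Ptn.empty.size = 0 := by
  rw [Ptn.empty.size_eq_sum (le_of_eq len_empty), Finset.range_zero, Finset.sum_empty]

lemma nstat_empty : Ptn.empty.nstat = 0 := by
  rw [Ptn.empty.nstat_eq_sum (le_of_eq len_empty), Finset.range_zero, Finset.sum_empty]

lemma eq_empty_of_size_zero {lam : Ptn} (h : lam.size = 0) : lam = Ptn.empty := by
  refine Ptn.ext' (funext fun j => ?_)
  have h1 := lam.parts_le_size j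
  have h2 : Ptn.empty.parts j = 0 := by simp [Ptn.empty, Ptn.onePow]
  omega

lemma Tset_zero : Tset 0 0 = {Ptn.empty} := by
  ext lam
  rw [mem_Tset, Finset.mem_singleton]
  constructor
  · exact fun h => eq_empty_of_size_zero h.1
  · rintro rfl; exact ⟨size_empty, len_empty⟩

lemma Gq_zero_zero : Gq 0 0 = 1 := by
  rw [Gq, Tset_zero, Finset.sum_singleton]
  simp only [Fq, nstat_empty, Pq_zero]
  have hq : Qq Ptn.empty = 1 := by
    rw [Qq_eq_prod _ (le_of_eq size_empty), Finset.range_zero, Finset.prod_empty]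
  rw [hq]
  simp

lemma Gq_eq_zero_big {n c : ℕ} (h : n < c) : Gq n c = 0 := by
  have he : Tset n c = ∅ := Finset.eq_empty_of_forall_notMem fun lam hm => by
    rw [mem_Tset] at hm
    have := lam.len_le_size
    omega
  rw [Gq, he, Finset.sum_empty]

lemma Gq_zero_col {n : ℕ} (hn : n ≠ 0) : Gq n 0 = 0 := by
  have he : Tset n 0 = ∅ := Finset.eq_empty_of_forall_notMem fun lam hm => by
    rw [mem_Tset] at hm
    have h0 : lam.size = 0 := by
      rw [lam.size_eq_sum (le_of_eq hm.2), Finset.range_zero, Finset.sum_empty]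
    omega
  rw [Gq, he, Finset.sum_empty]

lemma Gq_rec {n l : ℕ} (hl : 1 ≤ l) (hln : l ≤ n) :
    Gq n l = tq ^ (l * (l - 1)) * ∑ j ∈ Finset.range (l + 1), Bq l j * Gq (n - l) j := by
  have hstep : Gq n l = ∑ mu ∈ Sset (n - l) l, Fq l (mu.pad l) := by
    rw [Gq]
    refine Finset.sum_nbij' (fun lam => lam.strip) (fun mu => mu.pad l) ?_ ?_ ?_ ?_ ?_
    · intro lam hm
      rw [mem_Tset] at hm
      show lam.strip ∈ Sset (n - l) l
      rw [mem_Sset]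
      have h3 := lam.size_strip
      refine ⟨by omega, ?_⟩
      rw [← hm.2]; exact lam.len_strip_le
    · intro mu hm
      rw [mem_Sset] at hm
      show mu.pad l ∈ Tset n l
      rw [mem_Tset]
      exact ⟨by rw [mu.size_pad hm.2]; omega, mu.len_pad hm.2⟩
    · intro lam hm
      rw [mem_Tset] at hm
      show lam.strip.pad l = lam
      rw [← hm.2]; exact lam.pad_strip
    · intro mu hm
      rw [mem_Sset] at hm
      show (mu.pad l).strip = mu
      exact mu.strip_pad hm.2
    · intro lam hm
      rw [mem_Tset] at hm
      show Fq l lam = Fq l (lam.strip.pad l)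
      have h4 : lam.strip.pad l = lam := by rw [← hm.2]; exact lam.pad_strip
      rw [h4]
  have hmap : ∀ mu ∈ Sset (n - l) l, mu.len ∈ Finset.range (l + 1) := by
    intro mu hm
    rw [mem_Sset] at hm
    exact Finset.mem_range.mpr (by omega)
  rw [hstep, ← Finset.sum_fiberwise_of_maps_to hmap (fun mu => Fq l (mu.pad l))]
  have hfib : ∀ j ∈ Finset.range (l + 1),
      ((Sset (n - l) l).filter (fun mu => mu.len = j)) = Tset (n - l) j := by
    intro j hj
    have hjl := Finset.mem_range.mp hj
    ext mu
    simp only [Finset.mem_filter, mem_Sset, mem_Tset]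
    constructor
    · rintro ⟨⟨h1, _⟩, h3⟩; exact ⟨h1, h3⟩
    · rintro ⟨h1, h2⟩; exact ⟨⟨h1, by omega⟩, h2⟩
  have hterm : ∀ j ∈ Finset.range (l + 1), ∀ mu ∈ Tset (n - l) j,
      Fq l (mu.pad l) = tq ^ (l * (l - 1)) * (Bq l j * Fq j mu) := by
    intro j hj mu hm
    rw [mem_Tset] at hm
    have hjl : j ≤ l := by have := Finset.mem_range.mp hj; omega
    have hlen : mu.len ≤ l := le_trans (le_of_eq hm.2) hjl
    simp only [Fq]
    rw [Qq_pad mu hlen, Bq_def hjl, mu.nstat_pad hlen, pow_add, hm.2]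
    have h1 := Pq_ne_zero j
    have h2 := Pq_ne_zero (l - j)
    have h3 := Qq_ne_zero mu
    field_simp
  rw [Finset.mul_sum]
  refine Finset.sum_congr rfl fun j hj => ?_
  rw [hfib j hj, Finset.sum_congr rfl (hterm j hj), Gq, ← Finset.mul_sum, ← Finset.mul_sum]

lemma Gq_main : ∀ n l : ℕ, 1 ≤ l → l ≤ n →
    Gq n l = tq ^ (l * (l - 1)) * Bq (n - 1) (l - 1) := by
  intro n
  induction n using Nat.strong_induction_on with
  | _ n ih =>
    intro l hl hln
    rw [Gq_rec hl hln]
    congr 1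
    rcases eq_or_lt_of_le hln with rfl | hlt
    · rw [Nat.sub_self]
      rw [Finset.sum_eq_single_of_mem 0 (Finset.mem_range.mpr (by omega))]
      · rw [Bq_zero, Gq_zero_zero, one_mul, Bq_self]
      · intro j _ hj
        rw [Gq_eq_zero_big (show (0:ℕ) < j by omega)]
        ring
    · have hm1 : 1 ≤ n - l := by omega
      have hG : ∀ k, Gq (n - l) (k + 1) = tq ^ (k * (k + 1)) * Bq (n - l - 1) k := by
        intro k
        rcases le_or_gt (k + 1) (n - l) with hk | hk
        · rw [ih (n - l) (by omega) (k + 1) (by omega) hk]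
          rw [show k + 1 - 1 = k by omega, show (k+1) * k = k * (k+1) by ring]
        · rw [Gq_eq_zero_big hk, Bq_eq_zero (by omega : n - l - 1 < k)]
          ring
      rw [Finset.sum_range_succ', Gq_zero_col (by omega : n - l ≠ 0)]
      have hsum : ∀ k ∈ Finset.range l, Bq l (k + 1) * Gq (n - l) (k + 1)
          = Bq l (k + 1) * tq ^ (k * (k + 1)) * Bq (n - l - 1) k := by
        intro k _
        rw [hG k]; ring
      rw [Finset.sum_congr rfl hsum]
      have hD := (vand (l + (n - l))).1 l (n - l) hl hm1 le_rfl
      rw [Dsum] at hD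
      rw [mul_zero, add_zero, hD, show l + (n - l) - 1 = n - 1 by omega]

end PartSum
/-- for all `1 ≤ l ≤ n`,
`Σ_{|λ|=n, ℓ(λ)=l} t^{2n(λ)} [l choose m₁(λ),…,m_n(λ)]_t = t^{l(l−1)} [n−1 choose l−1]_t`
(an identity of polynomials in `t`, stated in the field `ℚ(t)` of rational functions,
in which `ℤ[t]` embeds; the `t`-multinomial coefficient is
`(t;t)_l / ∏ᵢ (t;t)_{mᵢ(λ)}`). -/
theorem multinomial_partition_identity (n l : ℕ) (hl : 1 ≤ l) (hln : l ≤ n) :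
    ∑ᶠ (lam : Ptn) (_ : lam.size = n ∧ lam.len = l),
        (RatFunc.X : RatFunc ℚ) ^ (2 * lam.nstat) *
          (qPoch (RatFunc.X : RatFunc ℚ) RatFunc.X l /
            ∏ᶠ i : ℕ, qPoch (RatFunc.X : RatFunc ℚ) RatFunc.X (lam.mult (i + 1)))
      = (RatFunc.X : RatFunc ℚ) ^ (l * (l - 1)) *
          qBinom (RatFunc.X : RatFunc ℚ) (n - 1) (l - 1) := by
  show ∑ᶠ (lam : Ptn) (_ : lam ∈ {q : Ptn | q.size = n ∧ q.len = l}), Fq l lam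
      = tq ^ (l * (l - 1)) * Bq (n - 1) (l - 1)
  rw [finsum_mem_eq_finite_toFinset_sum (fun lam => Fq l lam) (Ptn.finite_cond n l)]
  exact Gq_main n l hl hln
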